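/- arXiv:2002.01458 — 3 statements merged into one kernel-verified Lean document; each statement's English description precedes it below -/
import Mathlib

section
/- Let g : [0,1] → ℝ be continuous, and let f : [0,1] → ℝ be a function whose right-hand derivative exists at every point of [0,1) and equals g there, and such that f is Lipschitz continuous on [0,1]. Then f(1) − f(0) = ∫_0^1 g(s) ds. -/
open MeasureTheory intervalIntegral

/-- If g is continuous on [0,1], f is Lipschitz on [0,1] and has right-hand derivative g(s) at
every s ∈ [0,1), then f(1) − f(0) = ∫₀¹ g(s) ds. -/
theorem stmt3 (f g : ℝ → ℝ) (K : NNReal)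
    (hg : ContinuousOn g (Set.Icc 0 1))
    (hf : LipschitzOnWith K f (Set.Icc 0 1))
    (hderiv : ∀ s ∈ Set.Ico (0 : ℝ) 1, HasDerivWithinAt f (g s) (Set.Ici s) s) :
    f 1 - f 0 = ∫ s in (0 : ℝ)..1, g s := by
  symm
  apply intervalIntegral.integral_eq_sub_of_hasDeriv_right_of_le (by norm_num)
    hf.continuousOn
  · intro x hx
    rw [Set.mem_Ioo] at hx
    exact (hderiv x ⟨hx.1.le, hx.2⟩).mono (Set.Ioi_subset_Ici_self)
  · exact (hg.mono (by rw [Set.uIcc_of_le] ; norm_num)).intervalIntegrable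
end

section
/- Let ℓ ≥ 0 and let (y_k)_{k≥1} be distinct points of ℝ^d with Σ_k (1+|y_k|^ℓ) m₀({y_k}) < ∞ for a probability measure m₀ supported on {y_k}. Let ζ₁, ζ₂, … be i.i.d. with law m₀ and m^N = (1/N)Σ_{i=1}^N δ_{ζ_i}. Then ∫_{ℝ^d}(1+|y|^ℓ)|m^N − m₀|(dy) converges to 0 almost surely as N → ∞. -/
open MeasureTheory ProbabilityTheory ENNReal Filter

/-- Total variation measure of the difference of two (finite) measures. -/
noncomputable def tvMeasure {α : Type*} [MeasurableSpace α] (μ ν : Measure α) : Measure α :=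
  (μ - ν) + (ν - μ)

section Aux

variable {α : Type*} [MeasurableSpace α] [MeasurableSingletonClass α]

lemma aux_range_meas (y : ℕ → α) : MeasurableSet (Set.range y) := by
  rw [Set.range_eq_iUnion]
  exact MeasurableSet.iUnion fun k => measurableSet_singleton _

lemma aux_lintegral_eq_tsum (y : ℕ → α) (hy : Function.Injective y)
    (μ : Measure α) (hμ : μ (Set.range y)ᶜ = 0) (f : α → ℝ≥0∞) (hf : Measurable f) :
    ∫⁻ x, f x ∂μ = ∑' k, f (y k) * μ {y k} := by
  have hd : Pairwise (Function.onFun Disjoint (fun k => ({y k} : Set α))) := by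
    intro i j hij
    simp only [Function.onFun, Set.disjoint_singleton]
    exact hy.ne hij
  rw [← lintegral_add_compl f (aux_range_meas y), setLIntegral_measure_zero _ _ hμ, add_zero,
    Set.range_eq_iUnion, lintegral_iUnion (fun k => measurableSet_singleton _) hd]
  exact tsum_congr fun k => lintegral_singleton f (y k)

lemma aux_sub_le (y : ℕ → α) (hy : Function.Injective y)
    (μ ν : Measure α) (hμ : μ (Set.range y)ᶜ = 0) :
    μ - ν ≤ Measure.sum (fun k => (μ {y k} - ν {y k}) • Measure.dirac (y k)) := by
  refine Measure.sub_le_of_le_add (Measure.le_iff.2 fun s hs => ?_)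
  have hd : Pairwise (Function.onFun Disjoint (fun k => s ∩ ({y k} : Set α))) := by
    intro i j hij
    refine Set.disjoint_left.2 ?_
    rintro x ⟨-, hx⟩ ⟨-, hx'⟩
    rw [Set.mem_singleton_iff] at hx hx'
    exact hy.ne hij (by rw [← hx, ← hx'])
  have h2 : s ∩ Set.range y = ⋃ k, s ∩ {y k} := by
    rw [Set.range_eq_iUnion, Set.inter_iUnion]
  calc μ s = μ (⋃ k, s ∩ {y k}) := by rw [← h2, measure_inter_conull hμ]
    _ ≤ ∑' k, μ (s ∩ {y k}) := measure_iUnion_le _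
    _ ≤ ∑' k, ((μ {y k} - ν {y k}) * Measure.dirac (y k) s + ν (s ∩ {y k})) := by
        refine ENNReal.tsum_le_tsum fun k => ?_
        by_cases hk : y k ∈ s
        · have hks : s ∩ {y k} = {y k} :=
            Set.inter_eq_self_of_subset_right (Set.singleton_subset_iff.2 hk)
          rw [hks, Measure.dirac_apply' _ hs, Set.indicator_of_mem hk, Pi.one_apply, mul_one]
          exact le_tsub_add
        · rw [Set.inter_singleton_eq_empty.2 hk, measure_empty]
          exact zero_le
    _ = (∑' k, (μ {y k} - ν {y k}) * Measure.dirac (y k) s) + ∑' k, ν (s ∩ {y k}) :=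
        ENNReal.tsum_add
    _ ≤ (Measure.sum fun k => (μ {y k} - ν {y k}) • Measure.dirac (y k)) s + ν s := by
        refine add_le_add (le_of_eq ?_) ?_
        · rw [Measure.sum_apply _ hs]
          exact tsum_congr fun k => by rw [Measure.smul_apply, smul_eq_mul]
        · rw [← measure_iUnion hd fun k => hs.inter (measurableSet_singleton _)]
          exact measure_mono (Set.iUnion_subset fun k => Set.inter_subset_left)
    _ = ((Measure.sum fun k => (μ {y k} - ν {y k}) • Measure.dirac (y k)) + ν) s := by
        rw [Measure.add_apply]

lemma aux_scheffe {u : ℕ → ℕ → ℝ≥0∞} {v : ℕ → ℝ≥0∞} (hS : ∑' k, v k ≠ ⊤)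
    (hpt : ∀ k, Tendsto (fun N => u N k) atTop (nhds (v k)))
    (hsum : Tendsto (fun N => ∑' k, u N k) atTop (nhds (∑' k, v k))) :
    Tendsto (fun N => (∑' k, (u N k - v k)) + ∑' k, (v k - u N k)) atTop (nhds 0) := by
  have hmle : ∀ N k, min (u N k) (v k) ≤ v k := fun N k => min_le_right _ _
  have hmleu : ∀ N k, min (u N k) (v k) ≤ u N k := fun N k => min_le_left _ _
  have hmsum_le : ∀ N, ∑' k, min (u N k) (v k) ≤ ∑' k, v k :=
    fun N => ENNReal.tsum_le_tsum (hmle N)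
  have hmne : ∀ N, ∑' k, min (u N k) (v k) ≠ ⊤ :=
    fun N => ne_top_of_le_ne_top hS (hmsum_le N)
  have hm : Tendsto (fun N => ∑' k, min (u N k) (v k)) atTop (nhds (∑' k, v k)) := by
    have h := tendsto_lintegral_of_dominated_convergence (μ := Measure.count (α := ℕ))
      (F := fun N k => min (u N k) (v k)) (f := v) v (fun N => measurable_from_nat)
      (fun N => ae_of_all _ (hmle N)) (by rwa [lintegral_count])
      (ae_of_all _ fun k => by simpa using ((hpt k).min (tendsto_const_nhds (x := v k) (f := atTop (α := ℕ)))))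
    simpa [lintegral_count] using h
  have h1 : Tendsto (fun N => ∑' k, (u N k - v k)) atTop (nhds 0) := by
    have hub : ∀ N, ∑' k, (u N k - v k) ≤ (∑' k, u N k) - ∑' k, min (u N k) (v k) := by
      intro N
      rw [← ENNReal.tsum_sub (hmne N) (hmleu N)]
      exact ENNReal.tsum_le_tsum fun k => tsub_le_tsub_left (hmle N k) _
    have hto : Tendsto (fun N => (∑' k, u N k) - ∑' k, min (u N k) (v k)) atTop (nhds 0) := by
      have := ENNReal.Tendsto.sub hsum hm (Or.inl hS)
      simpa using this
    exact tendsto_of_tendsto_of_tendsto_of_le_of_le tendsto_const_nhds hto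
      (fun N => zero_le) hub
  have h2 : Tendsto (fun N => ∑' k, (v k - u N k)) atTop (nhds 0) := by
    have hub : ∀ N, ∑' k, (v k - u N k) ≤ (∑' k, v k) - ∑' k, min (u N k) (v k) := by
      intro N
      rw [← ENNReal.tsum_sub (hmne N) (hmle N)]
      exact ENNReal.tsum_le_tsum fun k => tsub_le_tsub_left (hmleu N k) _
    have hto : Tendsto (fun N => (∑' k, v k) - ∑' k, min (u N k) (v k)) atTop (nhds 0) := by
      have := ENNReal.Tendsto.sub tendsto_const_nhds hm (Or.inl hS)
      simpa using this
    exact tendsto_of_tendsto_of_tendsto_of_le_of_le tendsto_const_nhds hto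
      (fun N => zero_le) hub
  simpa using h1.add h2

end Aux

/-- For a discrete m₀ ∈ P_ℓ(ℝ^d) supported on distinct points (y_k) with
Σ_k (1+|y_k|^ℓ) m₀({y_k}) < ∞, and i.i.d. ζᵢ with law m₀,
∫ (1+|y|^ℓ) |m^N − m₀|(dy) → 0 almost surely as N → ∞. -/
theorem stmt16 {Ω : Type*} [MeasurableSpace Ω] (P : Measure Ω) [IsProbabilityMeasure P]
    (d : ℕ) (ℓ : ℝ) (hℓ : 0 ≤ ℓ)
    (y : ℕ → EuclideanSpace ℝ (Fin d)) (hy : Function.Injective y)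
    (m₀ : Measure (EuclideanSpace ℝ (Fin d))) [IsProbabilityMeasure m₀]
    (hsupp : m₀ (Set.range y)ᶜ = 0)
    (hmom : (∑' k : ℕ, ENNReal.ofReal (1 + ‖y k‖ ^ ℓ) * m₀ {y k}) ≠ ⊤)
    (ζ : ℕ → Ω → EuclideanSpace ℝ (Fin d)) (hmeas : ∀ i, Measurable (ζ i))
    (hindep : iIndepFun ζ P)
    (hlaw : ∀ i, Measure.map (ζ i) P = m₀)
    (emp : ℕ → Ω → Measure (EuclideanSpace ℝ (Fin d)))
    (hemp : ∀ N ω, emp N ω = (N : ℝ≥0∞)⁻¹ • ∑ i ∈ Finset.range N, Measure.dirac (ζ i ω)) :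
    ∀ᵐ ω ∂P, Tendsto
      (fun N => ∫⁻ x, ENNReal.ofReal (1 + ‖x‖ ^ ℓ) ∂(tvMeasure (emp N ω) m₀))
      atTop (nhds 0) := by
  set g : EuclideanSpace ℝ (Fin d) → ℝ := fun x => 1 + ‖x‖ ^ ℓ with hgdef
  set f : EuclideanSpace ℝ (Fin d) → ℝ≥0∞ := fun x => ENNReal.ofReal (1 + ‖x‖ ^ ℓ) with hfdef
  have hgc : Continuous g :=
    continuous_const.add (continuous_norm.rpow_const (fun x => Or.inr hℓ))
  have hgm : Measurable g := hgc.measurable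
  have hfm : Measurable f := hgm.ennreal_ofReal
  have hg0 : ∀ x, 0 ≤ g x := fun x =>
    add_nonneg zero_le_one (Real.rpow_nonneg (norm_nonneg _) ℓ)
  have hfg : ∀ x, f x = ENNReal.ofReal (g x) := fun _ => rfl
  have hf_top : ∀ x, f x ≠ ⊤ := fun _ => ENNReal.ofReal_ne_top
  -- moments
  have hSm : ∫⁻ x, f x ∂m₀ = ∑' k, f (y k) * m₀ {y k} :=
    aux_lintegral_eq_tsum y hy m₀ hsupp f hfm
  have hS_ne : ∫⁻ x, f x ∂m₀ ≠ ⊤ := by rw [hSm]; exact hmom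
  have hg_int : Integrable g m₀ := by
    refine ⟨hgm.aestronglyMeasurable, ?_⟩
    show ∫⁻ x, ‖g x‖ₑ ∂m₀ < ⊤
    rw [lintegral_congr (fun x => Real.enorm_eq_ofReal (hg0 x))]
    exact hS_ne.lt_top
  have hofReal : ENNReal.ofReal (∫ x, g x ∂m₀) = ∫⁻ x, f x ∂m₀ :=
    ofReal_integral_eq_lintegral_ofReal hg_int (ae_of_all _ hg0)
  have hident : ∀ i, IdentDistrib (ζ i) (ζ 0) P P := fun i =>
    ⟨(hmeas i).aemeasurable, (hmeas 0).aemeasurable, by rw [hlaw i, hlaw 0]⟩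
  -- SLLN for g ∘ ζ
  have hintB : Integrable (fun ω => g (ζ 0 ω)) P := by
    have h := hg_int
    rw [← hlaw 0] at h
    exact (integrable_map_measure hgm.aestronglyMeasurable (hmeas 0).aemeasurable).1 h
  have hEB : (∫ ω, g (ζ 0 ω) ∂P) = ∫ x, g x ∂m₀ := by
    rw [← hlaw 0, integral_map (hmeas 0).aemeasurable hgm.aestronglyMeasurable]
  have hB : ∀ᵐ ω ∂P, Tendsto (fun n : ℕ => (∑ i ∈ Finset.range n, g (ζ i ω)) / n) atTop
      (nhds (∫ x, g x ∂m₀)) := by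
    have h := strong_law_ae_real (fun i ω => g (ζ i ω)) hintB
      (fun i j hij => ((hindep.indepFun hij).comp hgm hgm))
      (fun i => (hident i).comp hgm)
    rw [show (P[fun ω => g (ζ 0 ω)]) = ∫ x, g x ∂m₀ from hEB] at h
    exact h
  -- SLLN for indicators
  have hindk : ∀ k : ℕ, ∀ᵐ ω ∂P, Tendsto
      (fun n : ℕ => (∑ i ∈ Finset.range n,
        Set.indicator {y k} (fun _ => (1 : ℝ)) (ζ i ω)) / n)
      atTop (nhds ((m₀ {y k}).toReal)) := by
    intro k
    set gk : EuclideanSpace ℝ (Fin d) → ℝ := Set.indicator {y k} (fun _ => (1 : ℝ)) with hgk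
    have hgkm : Measurable gk := measurable_const.indicator (measurableSet_singleton _)
    have hint : Integrable (fun ω => gk (ζ 0 ω)) P := by
      have heq : (fun ω => gk (ζ 0 ω))
          = Set.indicator (ζ 0 ⁻¹' {y k}) (fun _ => (1 : ℝ)) := by
        ext ω'
        by_cases h : ζ 0 ω' ∈ ({y k} : Set (EuclideanSpace ℝ (Fin d)))
        · rw [hgk, Set.indicator_of_mem h, Set.indicator_of_mem (by exact h)]
        · rw [hgk, Set.indicator_of_notMem h, Set.indicator_of_notMem (by exact h)]
      rw [heq]
      exact (integrable_const (1 : ℝ)).indicator ((hmeas 0) (measurableSet_singleton _))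
    have hE1 : ∫ x, gk x ∂m₀ = (m₀ {y k}).toReal := by
      rw [hgk, integral_indicator_const (1 : ℝ) (measurableSet_singleton _)]
      simp
      rfl
    have hE : (∫ ω, gk (ζ 0 ω) ∂P) = (m₀ {y k}).toReal := by
      rw [← hE1, ← hlaw 0, integral_map (hmeas 0).aemeasurable hgkm.aestronglyMeasurable]
    have h := strong_law_ae_real (fun i ω => gk (ζ i ω)) hint
      (fun i j hij => ((hindep.indepFun hij).comp hgkm hgkm))
      (fun i => (hident i).comp hgkm)
    rw [show (P[fun ω => gk (ζ 0 ω)]) = (m₀ {y k}).toReal from hE] at h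
    exact h
  -- support of the samples
  have hRm : MeasurableSet (Set.range y) := aux_range_meas y
  have hR : ∀ i : ℕ, ∀ᵐ ω ∂P, ζ i ω ∈ Set.range y := by
    intro i
    rw [ae_iff]
    have heq : {ω | ¬ ζ i ω ∈ Set.range y} = ζ i ⁻¹' (Set.range y)ᶜ := rfl
    rw [heq, ← Measure.map_apply (hmeas i) hRm.compl, hlaw i]
    exact hsupp
  filter_upwards [hB, ae_all_iff.2 hindk, ae_all_iff.2 hR] with ω hωB hωA hωR
  -- deterministic part
  have hempsupp : ∀ N, emp N ω (Set.range y)ᶜ = 0 := by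
    intro N
    rw [hemp, Measure.smul_apply, Measure.finset_sum_apply, smul_eq_mul]
    have hz : ∀ i ∈ Finset.range N, Measure.dirac (ζ i ω) (Set.range y)ᶜ = 0 := by
      intro i _
      rw [Measure.dirac_apply' _ hRm.compl, Set.indicator_of_notMem (by simpa using hωR i)]
    rw [Finset.sum_eq_zero hz, mul_zero]
  have hemp_lint : ∀ N, ∫⁻ x, f x ∂(emp N ω)
      = (N : ℝ≥0∞)⁻¹ * ∑ i ∈ Finset.range N, f (ζ i ω) := by
    intro N
    rw [hemp, lintegral_smul_measure, lintegral_finset_sum_measure]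
    congr 1
    exact Finset.sum_congr rfl fun i _ => lintegral_dirac' _ hfm
  have hNpos : ∀ N : ℕ, 1 ≤ N → ((N : ℝ≥0∞)⁻¹ * ∑ i ∈ Finset.range N, f (ζ i ω))
      = ENNReal.ofReal ((∑ i ∈ Finset.range N, g (ζ i ω)) / N) := by
    intro N hN
    have hN0 : (0 : ℝ) < N := by exact_mod_cast hN
    rw [div_eq_mul_inv, ENNReal.ofReal_mul' (inv_nonneg.2 hN0.le),
      ENNReal.ofReal_inv_of_pos hN0, ENNReal.ofReal_natCast,
      ENNReal.ofReal_sum_of_nonneg (fun i _ => hg0 _), mul_comm]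
  have hval : ∀ (k : ℕ) (N : ℕ), 1 ≤ N → emp N ω {y k}
      = ENNReal.ofReal ((∑ i ∈ Finset.range N,
        Set.indicator {y k} (fun _ => (1 : ℝ)) (ζ i ω)) / N) := by
    intro k N hN
    have hN0 : (0 : ℝ) < N := by exact_mod_cast hN
    rw [hemp, Measure.smul_apply, Measure.finset_sum_apply, smul_eq_mul,
      div_eq_mul_inv, ENNReal.ofReal_mul' (inv_nonneg.2 hN0.le),
      ENNReal.ofReal_inv_of_pos hN0, ENNReal.ofReal_natCast,
      ENNReal.ofReal_sum_of_nonneg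
        (fun i _ => Set.indicator_nonneg (fun _ _ => zero_le_one) _), mul_comm]
    congr 1
    refine Finset.sum_congr rfl fun i _ => ?_
    rw [Measure.dirac_apply' _ (measurableSet_singleton _)]
    by_cases h : ζ i ω ∈ ({y k} : Set (EuclideanSpace ℝ (Fin d)))
    · simp [Set.indicator_of_mem h]
    · simp [Set.indicator_of_notMem h]
  set u : ℕ → ℕ → ℝ≥0∞ := fun N k => f (y k) * emp N ω {y k} with hu
  set v : ℕ → ℝ≥0∞ := fun k => f (y k) * m₀ {y k} with hv
  have hvS : ∑' k, v k ≠ ⊤ := hmom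
  have hpt : ∀ k, Tendsto (fun N => u N k) atTop (nhds (v k)) := by
    intro k
    have h2 : Tendsto (fun N : ℕ => ENNReal.ofReal ((∑ i ∈ Finset.range N,
        Set.indicator {y k} (fun _ => (1 : ℝ)) (ζ i ω)) / N)) atTop
        (nhds (ENNReal.ofReal ((m₀ {y k}).toReal))) :=
      (ENNReal.continuous_ofReal.tendsto _).comp (hωA k)
    rw [ENNReal.ofReal_toReal (measure_ne_top m₀ _)] at h2
    have h1 : Tendsto (fun N : ℕ => emp N ω {y k}) atTop (nhds (m₀ {y k})) := by
      refine h2.congr' ?_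
      filter_upwards [eventually_ge_atTop 1] with N hN
      exact (hval k N hN).symm
    exact ENNReal.Tendsto.const_mul h1 (Or.inr (hf_top _))
  have hSsum : ∑' k, v k = ∫⁻ x, f x ∂m₀ := hSm.symm
  have husum : Tendsto (fun N => ∑' k, u N k) atTop (nhds (∑' k, v k)) := by
    have h2 : Tendsto (fun N : ℕ => ENNReal.ofReal ((∑ i ∈ Finset.range N, g (ζ i ω)) / N))
        atTop (nhds (ENNReal.ofReal (∫ x, g x ∂m₀))) :=
      (ENNReal.continuous_ofReal.tendsto _).comp hωB
    rw [hofReal, ← hSsum] at h2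
    refine h2.congr' ?_
    filter_upwards [eventually_ge_atTop 1] with N hN
    rw [show (∑' k, u N k) = ∫⁻ x, f x ∂(emp N ω) from
      (aux_lintegral_eq_tsum y hy (emp N ω) (hempsupp N) f hfm).symm,
      hemp_lint N, hNpos N hN]
  have hT := aux_scheffe hvS hpt husum
  refine tendsto_of_tendsto_of_tendsto_of_le_of_le tendsto_const_nhds hT
    (fun N => zero_le) ?_
  intro N
  have hle1 := aux_sub_le y hy (emp N ω) m₀ (hempsupp N)
  have hle2 := aux_sub_le y hy m₀ (emp N ω) hsupp
  have hlint : ∀ (w : ℕ → ℝ≥0∞),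
      ∫⁻ x, f x ∂(Measure.sum fun k => w k • Measure.dirac (y k))
        = ∑' k, f (y k) * w k := by
    intro w
    rw [lintegral_sum_measure]
    exact tsum_congr fun k => by
      rw [lintegral_smul_measure, lintegral_dirac' _ hfm, smul_eq_mul, mul_comm]
  calc ∫⁻ x, f x ∂(tvMeasure (emp N ω) m₀)
      = ∫⁻ x, f x ∂(emp N ω - m₀) + ∫⁻ x, f x ∂(m₀ - emp N ω) := by
        rw [tvMeasure, lintegral_add_measure]
    _ ≤ (∑' k, f (y k) * (emp N ω {y k} - m₀ {y k}))
        + ∑' k, f (y k) * (m₀ {y k} - emp N ω {y k}) :=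
        add_le_add ((lintegral_mono' hle1 le_rfl).trans_eq (hlint _))
          ((lintegral_mono' hle2 le_rfl).trans_eq (hlint _))
    _ = (∑' k, (u N k - v k)) + ∑' k, (v k - u N k) := by
        congr 1
        · exact tsum_congr fun k => ENNReal.mul_sub (fun _ _ => hf_top _)
        · exact tsum_congr fun k => ENNReal.mul_sub (fun _ _ => hf_top _)
end

section
/- Let v ∈ (0,1) and m₀ be a probability measure on ℝ whose restriction to a neighbourhood of its v-quantile x₀ := inf{x : m₀((−∞,x]) ≥ v} admits a positive continuous density p₀. Let ν be a probability measure on ℝ with ν({x₀}) = 0 and set m_ε := m₀ + ε(ν − m₀), x_ε := inf{x : m_ε((−∞,x]) ≥ v}. Then lim_{ε→0^+} (x_ε − x₀)/ε = (m₀ − ν)((−∞, x₀]) / p₀(x₀). -/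
open MeasureTheory Filter Set ProbabilityTheory

lemma aux_cdf_continuousAt (μ : Measure ℝ) [IsProbabilityMeasure μ] (c : ℝ) (h : μ {c} = 0) :
    ContinuousAt (cdf μ) c := by
  rw [(cdf μ).mono.continuousAt_iff_leftLim_eq_rightLim, (cdf μ).rightLim_eq]
  have h2 := (cdf μ).measure_singleton c
  rw [measure_cdf, h] at h2
  have h3 : cdf μ c - Function.leftLim (cdf μ) c ≤ 0 := by
    have := ENNReal.ofReal_eq_zero.mp h2.symm
    linarith
  have h4 : Function.leftLim (cdf μ) c ≤ cdf μ c := (cdf μ).mono.leftLim_le le_rfl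
  linarith

lemma aux_incr (m₀ : Measure ℝ) [IsProbabilityMeasure m₀] (a b : ℝ) (p₀ : ℝ → ℝ)
    (hdens : m₀.restrict (Set.Ioo a b) =
      (volume.restrict (Set.Ioo a b)).withDensity (fun x => ENNReal.ofReal (p₀ x)))
    (x y : ℝ) (hax : a < x) (hxy : x ≤ y) (hyb : y < b) (l u : ℝ) (hl : 0 ≤ l) (hu : 0 ≤ u)
    (hbound : ∀ t ∈ Set.Ioc x y, l ≤ p₀ t ∧ p₀ t ≤ u) :
    l * (y - x) ≤ cdf m₀ y - cdf m₀ x ∧ cdf m₀ y - cdf m₀ x ≤ u * (y - x) := by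
  have hsub : Set.Ioc x y ⊆ Set.Ioo a b := fun t ht => ⟨hax.trans ht.1, lt_of_le_of_lt ht.2 hyb⟩
  have hmeas : m₀ (Set.Ioc x y) = ∫⁻ t in Set.Ioc x y, ENNReal.ofReal (p₀ t) ∂volume := by
    have h1 : m₀ (Set.Ioc x y) = m₀.restrict (Set.Ioo a b) (Set.Ioc x y) := by
      rw [Measure.restrict_apply measurableSet_Ioc, Set.inter_eq_left.mpr hsub]
    rw [h1, hdens, withDensity_apply _ measurableSet_Ioc,
      Measure.restrict_restrict measurableSet_Ioc, Set.inter_eq_left.mpr hsub]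
  have hvol : (volume (Set.Ioc x y)) = ENNReal.ofReal (y - x) := Real.volume_Ioc
  have hlow : ENNReal.ofReal (l * (y - x)) ≤ m₀ (Set.Ioc x y) := by
    rw [hmeas]
    calc ENNReal.ofReal (l * (y - x)) = ENNReal.ofReal l * volume (Set.Ioc x y) := by
          rw [hvol, ENNReal.ofReal_mul hl]
      _ = ∫⁻ _ in Set.Ioc x y, ENNReal.ofReal l ∂volume := by rw [setLIntegral_const]
      _ ≤ _ := setLIntegral_mono' measurableSet_Ioc
          (fun t ht => ENNReal.ofReal_le_ofReal (hbound t ht).1)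
  have hhigh : m₀ (Set.Ioc x y) ≤ ENNReal.ofReal (u * (y - x)) := by
    rw [hmeas]
    calc ∫⁻ t in Set.Ioc x y, ENNReal.ofReal (p₀ t) ∂volume
        ≤ ∫⁻ _ in Set.Ioc x y, ENNReal.ofReal u ∂volume := setLIntegral_mono' measurableSet_Ioc
          (fun t ht => ENNReal.ofReal_le_ofReal (hbound t ht).2)
      _ = ENNReal.ofReal u * volume (Set.Ioc x y) := by rw [setLIntegral_const]
      _ = ENNReal.ofReal (u * (y - x)) := by rw [hvol, ENNReal.ofReal_mul hu]
  have hsplit : m₀ (Set.Iic y) = m₀ (Set.Iic x) + m₀ (Set.Ioc x y) := by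
    rw [← measure_union (Set.Iic_disjoint_Ioc le_rfl) measurableSet_Ioc,
      Set.Iic_union_Ioc_eq_Iic hxy]
  have hne1 : m₀ (Set.Iic x) ≠ ⊤ := measure_ne_top _ _
  have hne2 : m₀ (Set.Ioc x y) ≠ ⊤ := measure_ne_top _ _
  have hdiff : cdf m₀ y - cdf m₀ x = (m₀ (Set.Ioc x y)).toReal := by
    rw [cdf_eq_real, cdf_eq_real, measureReal_def, measureReal_def, hsplit, ENNReal.toReal_add hne1 hne2]; ring
  constructor
  · rw [hdiff, ← ENNReal.toReal_ofReal (mul_nonneg hl (sub_nonneg.2 hxy))]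
    exact ENNReal.toReal_mono hne2 hlow
  · rw [hdiff, ← ENNReal.toReal_ofReal (mul_nonneg hu (sub_nonneg.2 hxy))]
    exact ENNReal.toReal_mono ENNReal.ofReal_ne_top hhigh

lemma aux_fincr (v : ℝ)
    (m₀ : Measure ℝ) [IsProbabilityMeasure m₀]
    (x₀ : ℝ) (a b : ℝ) (hab : x₀ ∈ Set.Ioo a b)
    (p₀ : ℝ → ℝ) (hp : 0 < p₀ x₀)
    (hdens : m₀.restrict (Set.Ioo a b) =
      (volume.restrict (Set.Ioo a b)).withDensity (fun x => ENNReal.ofReal (p₀ x)))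
    (hfv : cdf m₀ x₀ = v)
    (η δ : ℝ) (hηpos : 0 < η) (hη1 : η ≤ p₀ x₀ / 2) (hδpos : 0 < δ)
    (hball : ∀ t : ℝ, |t - x₀| ≤ δ → a < t ∧ t < b)
    (hpball : ∀ t : ℝ, |t - x₀| ≤ δ → |p₀ t - p₀ x₀| ≤ η) :
    ∀ z : ℝ, |z - x₀| ≤ δ → |cdf m₀ z - v - p₀ x₀ * (z - x₀)| ≤ η * |z - x₀| := by
  intro z hz
  have hbz := hball z hz
  rcases le_or_gt x₀ z with hc | hc
  · have hza : z - x₀ ≤ δ := le_trans (le_abs_self _) hz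
    have hbounds : ∀ t ∈ Set.Ioc x₀ z, p₀ x₀ - η ≤ p₀ t ∧ p₀ t ≤ p₀ x₀ + η := by
      intro t ht
      have htd : |t - x₀| ≤ δ := by
        rw [abs_of_nonneg (by linarith [ht.1.le] : (0:ℝ) ≤ t - x₀)]
        linarith [ht.2]
      have h3 := abs_le.mp (hpball t htd)
      exact ⟨by linarith [h3.1], by linarith [h3.2]⟩
    have h := aux_incr m₀ a b p₀ hdens x₀ z hab.1 hc hbz.2 (p₀ x₀ - η) (p₀ x₀ + η)
      (by linarith) (by linarith) hbounds
    rw [hfv] at h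
    rw [abs_of_nonneg (by linarith : (0:ℝ) ≤ z - x₀), abs_le]
    exact ⟨by nlinarith [h.1], by nlinarith [h.2]⟩
  · have hza : x₀ - z ≤ δ := by
      rw [abs_sub_comm] at hz; exact le_trans (le_abs_self _) hz
    have hbounds : ∀ t ∈ Set.Ioc z x₀, p₀ x₀ - η ≤ p₀ t ∧ p₀ t ≤ p₀ x₀ + η := by
      intro t ht
      have htd : |t - x₀| ≤ δ := by
        rw [abs_of_nonpos (by linarith [ht.2] : t - x₀ ≤ 0)]
        linarith [ht.1]
      have h3 := abs_le.mp (hpball t htd)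
      exact ⟨by linarith [h3.1], by linarith [h3.2]⟩
    have h := aux_incr m₀ a b p₀ hdens z x₀ hbz.1 hc.le hab.2 (p₀ x₀ - η) (p₀ x₀ + η)
      (by linarith) (by linarith) hbounds
    rw [hfv] at h
    rw [abs_of_nonpos (by linarith : z - x₀ ≤ 0), abs_le]
    exact ⟨by nlinarith [h.1], by nlinarith [h.2]⟩

set_option maxHeartbeats 2000000 in
lemma aux_main (v : ℝ) (hv0 : 0 < v)
    (m₀ ν : Measure ℝ) [IsProbabilityMeasure m₀] [IsProbabilityMeasure ν]
    (x₀ : ℝ) (p₀ : ℝ → ℝ) (hp : 0 < p₀ x₀)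
    (hfv : cdf m₀ x₀ = v)
    (L η' M η δ : ℝ) (hη' : 0 < η')
    (hpL : p₀ x₀ * L = v - cdf ν x₀)
    (hML : |L| + η' ≤ M) (hM8 : 8 ≤ p₀ x₀ * M) (hM0 : 0 < M)
    (hηpos : 0 < η) (hη1 : η ≤ p₀ x₀ / 2) (hη2 : η * (M + 1) ≤ p₀ x₀ * η' / 8)
    (hδpos : 0 < δ)
    (hgball : ∀ t : ℝ, |t - x₀| ≤ δ → |cdf ν t - cdf ν x₀| ≤ η)
    (hf_incr : ∀ z : ℝ, |z - x₀| ≤ δ → |cdf m₀ z - v - p₀ x₀ * (z - x₀)| ≤ η * |z - x₀|)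
    (xq : ℝ → ℝ)
    (hxq : ∀ ε : ℝ, xq ε = sInf {x : ℝ |
      v ≤ (((ENNReal.ofReal (1 - ε) • m₀ + ENNReal.ofReal ε • ν)) (Set.Iic x)).toReal}) :
    ∃ d > 0, ∀ ε : ℝ, ε ∈ Set.Ioi (0:ℝ) → dist ε 0 < d → dist ((xq ε - x₀)/ε) L < η' := by
  obtain ⟨B, hBdef⟩ : ∃ B : ℝ, B = p₀ x₀ * (|L| + η') + p₀ x₀ * M + η * M + 1 := ⟨_, rfl⟩
  have hB0 : 0 < B := by rw [hBdef]; positivity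
  refine ⟨min (min (δ/(M+1)) (p₀ x₀ * δ/8)) (min (1/2) (p₀ x₀ * η'/(8*B))), by positivity, ?_⟩
  intro ε hεIoi hεd
  have hε0 : 0 < ε := hεIoi
  rw [Real.dist_eq, sub_zero, abs_of_pos hε0] at hεd
  have hεM : ε * (M + 1) ≤ δ := by
    have h1 : ε < δ/(M+1) := lt_of_lt_of_le hεd (le_trans (min_le_left _ _) (min_le_left _ _))
    rw [lt_div_iff₀ (by positivity)] at h1
    exact h1.le
  have hεδ : 8 * ε ≤ p₀ x₀ * δ := by
    have h1 : ε < p₀ x₀ * δ/8 := lt_of_lt_of_le hεd (le_trans (min_le_left _ _) (min_le_right _ _))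
    linarith
  have hεhalf : ε ≤ 1/2 :=
    (lt_of_lt_of_le hεd (le_trans (min_le_right _ _) (min_le_left _ _))).le
  have hεB : ε * B ≤ p₀ x₀ * η' / 8 := by
    have h1 : ε < p₀ x₀ * η'/(8*B) := lt_of_lt_of_le hεd (le_trans (min_le_right _ _) (min_le_right _ _))
    rw [lt_div_iff₀ (by positivity)] at h1
    nlinarith
  -- the perturbed cdf
  have hFε : ∀ z : ℝ, (((ENNReal.ofReal (1 - ε) • m₀ + ENNReal.ofReal ε • ν)) (Set.Iic z)).toReal
      = (1-ε) * cdf m₀ z + ε * cdf ν z := by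
    intro z
    rw [Measure.add_apply, Measure.smul_apply, Measure.smul_apply, smul_eq_mul, smul_eq_mul,
      ENNReal.toReal_add (ENNReal.mul_ne_top ENNReal.ofReal_ne_top (measure_ne_top _ _))
        (ENNReal.mul_ne_top ENNReal.ofReal_ne_top (measure_ne_top _ _)),
      ENNReal.toReal_mul, ENNReal.toReal_mul,
      ENNReal.toReal_ofReal (by linarith : (0:ℝ) ≤ 1 - ε), ENNReal.toReal_ofReal hε0.le,
      cdf_eq_real, cdf_eq_real, measureReal_def, measureReal_def]
  obtain ⟨cp, hcpdef⟩ : ∃ cp : ℝ, cp = L + η'/2 := ⟨_, rfl⟩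
  obtain ⟨cm, hcmdef⟩ : ∃ cm : ℝ, cm = L - η'/2 := ⟨_, rfl⟩
  have habsp : |cp| ≤ M := by
    calc |cp| = |L + η'/2| := by rw [hcpdef]
      _ ≤ |L| + |η'/2| := abs_add_le _ _
      _ = |L| + η'/2 := by rw [abs_of_pos (show (0:ℝ) < η'/2 by linarith)]
      _ ≤ M := by linarith
  have habsm : |cm| ≤ M := by
    calc |cm| = |L + (-(η'/2))| := by rw [hcmdef]; ring_nf
      _ ≤ |L| + |(-(η'/2))| := abs_add_le _ _
      _ = |L| + η'/2 := by rw [abs_neg, abs_of_pos (show (0:ℝ) < η'/2 by linarith)]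
      _ ≤ M := by linarith
  -- Claim 1 : x₀ + cp ε is in the quantile set
  have hypd : |x₀ + cp * ε - x₀| ≤ δ := by
    have : x₀ + cp * ε - x₀ = cp * ε := by ring
    rw [this, abs_mul, abs_of_pos hε0]
    nlinarith
  have claim1 : v ≤ (1-ε) * cdf m₀ (x₀ + cp * ε) + ε * cdf ν (x₀ + cp * ε) := by
    have h1 := hf_incr _ hypd
    have h2 := hgball _ hypd
    have hsimp : x₀ + cp * ε - x₀ = cp * ε := by ring
    rw [hsimp, abs_mul, abs_of_pos hε0] at h1
    have h1' := abs_le.mp h1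
    have h2' := abs_le.mp h2
    obtain ⟨A, hAdef⟩ : ∃ A : ℝ, A = p₀ x₀ * cp - η * M := ⟨_, rfl⟩
    have e1 : A * ε ≤ cdf m₀ (x₀ + cp * ε) - v := by
      have hint : 0 ≤ η * ε * (M - |cp|) :=
        mul_nonneg (mul_nonneg hηpos.le hε0.le) (sub_nonneg.2 habsp)
      nlinarith [h1'.1]
    have e2 : cdf ν x₀ - η ≤ cdf ν (x₀ + cp * ε) := by linarith [h2'.1]
    have eA : |A| ≤ B := by
      rw [hAdef, hBdef]
      have h3 : |p₀ x₀ * cp| ≤ p₀ x₀ * M := by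
        rw [abs_mul, abs_of_pos hp]; exact mul_le_mul_of_nonneg_left habsp hp.le
      have h4 := abs_le.mp h3
      rw [abs_le]
      constructor <;> nlinarith [abs_nonneg L]
    have eA' := abs_le.mp eA
    have hAL : A - p₀ x₀ * L = p₀ x₀ * η'/2 - η * M := by rw [hAdef, hcpdef]; ring
    -- (1-ε)(f-v) + ε(g-v) ≥ ε (A - εA - p L - η) ≥ ε (pη'/2 - η(M+1) - εB) ≥ ε pη'/4 > 0
    have s1 : (1-ε) * (A * ε) ≤ (1-ε) * (cdf m₀ (x₀ + cp * ε) - v) :=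
      mul_le_mul_of_nonneg_left e1 (by linarith)
    have s2 : ε * ((cdf ν x₀ - v) - η) ≤ ε * (cdf ν (x₀ + cp * ε) - v) :=
      mul_le_mul_of_nonneg_left (by linarith) hε0.le
    have s3 : (1-ε) * (A * ε) + ε * ((cdf ν x₀ - v) - η)
        = ε * ((A - p₀ x₀ * L - η) - ε * A) := by
      have : cdf ν x₀ - v = -(p₀ x₀ * L) := by linarith
      rw [this]; ring
    have s4 : ε * A ≤ ε * B := mul_le_mul_of_nonneg_left eA'.2 hε0.le
    have s5 : 0 ≤ (A - p₀ x₀ * L - η) - ε * A := by linarith [hAL, s4, hεB, hη2, mul_pos hp hη']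
    linarith [s1, s2, s3, mul_nonneg hε0.le s5]
  -- Claim 2 : everything in the quantile set is ≥ x₀ + cm ε
  have claim2 : ∀ y : ℝ, v ≤ (1-ε) * cdf m₀ y + ε * cdf ν y → x₀ + cm * ε ≤ y := by
    intro y hy
    by_contra hcon
    push_neg at hcon
    have hg1 : cdf ν y ≤ 1 := cdf_le_one _ _
    have hmono := monotone_cdf m₀
    rcases le_or_gt y (x₀ - δ) with hcase | hcase
    · -- far left : F_ε y ≤ F_ε (x₀ - δ) < v
      have hd : |x₀ - δ - x₀| ≤ δ := by
        have : x₀ - δ - x₀ = -δ := by ring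
        rw [this, abs_neg, abs_of_pos hδpos]
      have h1 := abs_le.mp (hf_incr _ hd)
      have hd2 : x₀ - δ - x₀ = -δ := by ring
      rw [hd2, abs_neg, abs_of_pos hδpos] at h1
      -- cdf m₀ (x₀ - δ) - v ≤ -pδ + ηδ ≤ -(p/2)δ
      have h2 : cdf m₀ (x₀-δ) - v ≤ -(p₀ x₀/2) * δ := by
        nlinarith [h1.2, mul_nonneg (show (0:ℝ) ≤ p₀ x₀/2 - η by linarith) hδpos.le]
      have h3 : cdf m₀ y ≤ cdf m₀ (x₀-δ) := hmono hcase
      have hq : cdf m₀ y - v ≤ -(p₀ x₀/2) * δ := by linarith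
      have hq0 : cdf m₀ y - v ≤ 0 := by nlinarith [mul_pos hp hδpos]
      have h4 : (1-ε) * (cdf m₀ y - v) ≤ (1/2) * (-(p₀ x₀/2) * δ) := by
        nlinarith [mul_nonneg (show (0:ℝ) ≤ 1/2 - ε by linarith)
          (show (0:ℝ) ≤ -(cdf m₀ y - v) by linarith)]
      have h5 : ε * (cdf ν y - v) ≤ ε := by
        nlinarith [mul_nonneg hε0.le (show (0:ℝ) ≤ 1 - (cdf ν y - v) by linarith)]
      linarith [h4, h5, hy, hεδ]
    · have hyd : |y - x₀| ≤ δ := by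
        rw [abs_le]
        constructor
        · linarith
        · have h6 : cm * ε ≤ M * ε :=
            mul_le_mul_of_nonneg_right (le_trans (le_abs_self _) habsm) hε0.le
          nlinarith
      have h1 := abs_le.mp (hf_incr _ hyd)
      have h2 := abs_le.mp (hgball _ hyd)
      rcases le_or_gt y (x₀ - M * ε) with hB' | hC
      · -- middle left : f y - v ≤ -(p-η)(x₀-y) ≤ -4ε
        have hay : |y - x₀| = x₀ - y := by rw [abs_of_nonpos (by nlinarith)] ; ring
        rw [hay] at h1
        have hxy0 : 0 ≤ x₀ - y := by nlinarith [mul_pos hM0 hε0]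
        have h3 : cdf m₀ y - v ≤ -(4*ε) := by
          nlinarith [h1.2,
            mul_nonneg (show (0:ℝ) ≤ p₀ x₀ - η - p₀ x₀/2 by linarith) hxy0,
            mul_nonneg (show (0:ℝ) ≤ p₀ x₀/2 by linarith)
              (show (0:ℝ) ≤ (x₀ - y) - M*ε by linarith),
            mul_nonneg (show (0:ℝ) ≤ p₀ x₀ * M - 8 by linarith) hε0.le]
        have h4 : (1-ε) * (cdf m₀ y - v) ≤ (1/2) * (-(4*ε)) := by
          nlinarith [mul_nonneg (show (0:ℝ) ≤ 1/2 - ε by linarith)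
            (show (0:ℝ) ≤ -(cdf m₀ y - v) by linarith)]
        have h5 : ε * (cdf ν y - v) ≤ ε := by
          nlinarith [mul_nonneg hε0.le (show (0:ℝ) ≤ 1 - (cdf ν y - v) by linarith)]
        linarith [h4, h5, hy]
      · -- near x₀ : quantitative bound
        have hay : |y - x₀| ≤ M * ε := by
          rw [abs_le]
          constructor
          · linarith
          · have h6 : cm * ε ≤ M * ε :=
              mul_le_mul_of_nonneg_right (le_trans (le_abs_self _) habsm) hε0.le
            linarith
        obtain ⟨A, hAdef⟩ : ∃ A : ℝ, A = p₀ x₀ * cm + η * M := ⟨_, rfl⟩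
        have e1 : cdf m₀ y - v ≤ A * ε := by
          have h6 : cdf m₀ y - v ≤ p₀ x₀ * (y - x₀) + η * |y - x₀| := by linarith [h1.2]
          have h7 : p₀ x₀ * (y - x₀) ≤ p₀ x₀ * (cm * ε) :=
            mul_le_mul_of_nonneg_left (by linarith) hp.le
          have h8 : η * |y - x₀| ≤ η * (M * ε) :=
            mul_le_mul_of_nonneg_left hay hηpos.le
          rw [hAdef]; nlinarith [h6, h7, h8]
        have e2 : cdf ν y - v ≤ -(p₀ x₀ * L) + η := by linarith [h2.2]
        have eA : |A| ≤ B := by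
          rw [hAdef, hBdef]
          have h3 : |p₀ x₀ * cm| ≤ p₀ x₀ * M := by
            rw [abs_mul, abs_of_pos hp]; exact mul_le_mul_of_nonneg_left habsm hp.le
          have h4 := abs_le.mp h3
          rw [abs_le]
          have hint1 : (0:ℝ) ≤ p₀ x₀ * (|L| + η') := mul_nonneg hp.le (by positivity)
          have hint2 : (0:ℝ) ≤ η * M := mul_nonneg hηpos.le hM0.le
          exact ⟨by linarith [h4.1, hint1, hint2], by linarith [h4.2, hint1, hint2]⟩
        have eA' := abs_le.mp eA
        have s1 : (1-ε) * (cdf m₀ y - v) ≤ (1-ε) * (A * ε) :=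
          mul_le_mul_of_nonneg_left e1 (by linarith)
        have s2 : ε * (cdf ν y - v) ≤ ε * (-(p₀ x₀ * L) + η) :=
          mul_le_mul_of_nonneg_left e2 hε0.le
        have s3 : (1-ε) * (A * ε) + ε * (-(p₀ x₀ * L) + η)
            = ε * ((A - p₀ x₀ * L + η) - ε * A) := by ring
        have hAL : A - p₀ x₀ * L = -(p₀ x₀ * η'/2) + η * M := by rw [hAdef, hcmdef]; ring
        have s4 : -(ε * B) ≤ ε * A := by
          have h9 := mul_le_mul_of_nonneg_left eA'.1 hε0.le
          linarith [h9]
        have s5 : (A - p₀ x₀ * L + η) - ε * A ≤ -(p₀ x₀ * η'/4) := by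
          linarith [hAL, s4, hεB, hη2, mul_pos hp hη']
        linarith [hy, s1, s2, s3, mul_le_mul_of_nonneg_left s5 hε0.le,
          mul_pos hε0 (by positivity : (0:ℝ) < p₀ x₀ * η'/4)]
  -- conclude
  have hmem : (x₀ + cp * ε) ∈ {x : ℝ |
      v ≤ (((ENNReal.ofReal (1 - ε) • m₀ + ENNReal.ofReal ε • ν)) (Set.Iic x)).toReal} := by
    rw [Set.mem_setOf_eq, hFε]; exact claim1
  have hlb : ∀ y ∈ {x : ℝ |
      v ≤ (((ENNReal.ofReal (1 - ε) • m₀ + ENNReal.ofReal ε • ν)) (Set.Iic x)).toReal},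
      x₀ + cm * ε ≤ y := by
    intro y hy
    rw [Set.mem_setOf_eq, hFε] at hy
    exact claim2 y hy
  have hup : xq ε ≤ x₀ + cp * ε := by
    rw [hxq ε]
    exact csInf_le ⟨x₀ + cm * ε, hlb⟩ hmem
  have hlo : x₀ + cm * ε ≤ xq ε := by
    rw [hxq ε]
    exact le_csInf ⟨_, hmem⟩ hlb
  rw [Real.dist_eq, abs_lt]
  have hd1 : cm ≤ (xq ε - x₀)/ε := by
    rw [le_div_iff₀ hε0]; linarith
  have hd2 : (xq ε - x₀)/ε ≤ cp := by
    rw [div_le_iff₀ hε0]; linarith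
  constructor
  · rw [hcmdef] at hd1; linarith
  · rw [hcpdef] at hd2; linarith

set_option maxHeartbeats 1000000 in
/-- Quantile differentiability. -/
theorem stmt17 (v : ℝ) (hv0 : 0 < v) (hv1 : v < 1)
    (m₀ ν : Measure ℝ) [IsProbabilityMeasure m₀] [IsProbabilityMeasure ν]
    (x₀ : ℝ) (hx₀ : x₀ = sInf {x : ℝ | v ≤ (m₀ (Set.Iic x)).toReal})
    (a b : ℝ) (hab : x₀ ∈ Set.Ioo a b)
    (p₀ : ℝ → ℝ) (hcont : ContinuousOn p₀ (Set.Ioo a b))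
    (hpos : ∀ x ∈ Set.Ioo a b, 0 < p₀ x)
    (hdens : m₀.restrict (Set.Ioo a b) =
      (volume.restrict (Set.Ioo a b)).withDensity (fun x => ENNReal.ofReal (p₀ x)))
    (hν : ν {x₀} = 0)
    (xq : ℝ → ℝ)
    (hxq : ∀ ε : ℝ, xq ε = sInf {x : ℝ |
      v ≤ (((ENNReal.ofReal (1 - ε) • m₀ + ENNReal.ofReal ε • ν)) (Set.Iic x)).toReal}) :
    Tendsto (fun ε : ℝ => (xq ε - x₀) / ε) (nhdsWithin 0 (Set.Ioi 0))
      (nhds (((m₀ (Set.Iic x₀)).toReal - (ν (Set.Iic x₀)).toReal) / p₀ x₀)) := by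
  have hp : 0 < p₀ x₀ := hpos x₀ hab
  -- m₀ has no atom at x₀
  have hm0x : m₀ {x₀} = 0 := by
    have hsub : {x₀} ⊆ Set.Ioo a b := Set.singleton_subset_iff.2 hab
    have h1 : m₀ {x₀} = m₀.restrict (Set.Ioo a b) {x₀} := by
      rw [Measure.restrict_apply (measurableSet_singleton _), Set.inter_eq_left.mpr hsub]
    rw [h1, hdens, withDensity_apply _ (measurableSet_singleton _),
      Measure.restrict_restrict (measurableSet_singleton _), Set.inter_eq_left.mpr hsub,
      Measure.restrict_eq_zero.mpr Real.volume_singleton, lintegral_zero_measure]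
  have hfc : ContinuousAt (cdf m₀) x₀ := aux_cdf_continuousAt _ _ hm0x
  have hgc : ContinuousAt (cdf ν) x₀ := aux_cdf_continuousAt _ _ hν
  -- the quantile set in terms of cdf
  have hSset : {x : ℝ | v ≤ (m₀ (Set.Iic x)).toReal} = {x | v ≤ cdf m₀ x} := by
    ext t; simp [cdf_eq_real, measureReal_def]
  have hx₀' : x₀ = sInf {x | v ≤ cdf m₀ x} := by rw [hx₀, hSset]
  have hne : {x | v ≤ cdf m₀ x}.Nonempty :=
    ((tendsto_cdf_atTop m₀).eventually (eventually_ge_nhds hv1)).exists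
  have hbdd : BddBelow {x | v ≤ cdf m₀ x} := by
    obtain ⟨R, hR⟩ := eventually_atBot.mp ((tendsto_cdf_atBot m₀).eventually
      (eventually_lt_nhds hv0))
    exact ⟨R, fun y hy => le_of_not_gt fun hlt => absurd hy (not_le.2 (hR y hlt.le))⟩
  have hlt : ∀ x < x₀, cdf m₀ x < v := by
    intro x hx
    by_contra hcon
    have h2 : x₀ ≤ x := by rw [hx₀']; exact csInf_le hbdd (not_lt.1 hcon)
    exact absurd hx (not_lt.2 h2)
  have hge : ∀ t, x₀ < t → v ≤ cdf m₀ t := by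
    intro t ht
    have h2 : sInf {x | v ≤ cdf m₀ x} < t := by rw [← hx₀']; exact ht
    obtain ⟨y, hy, hyt⟩ := (csInf_lt_iff hbdd hne).mp h2
    exact le_trans hy (monotone_cdf m₀ hyt.le)
  have hfv : cdf m₀ x₀ = v := by
    have h1 : cdf m₀ x₀ ≤ v :=
      le_of_tendsto (hfc.continuousWithinAt (s := Set.Iio x₀))
        (eventually_nhdsWithin_of_forall fun x hx => (hlt x hx).le)
    have h2 : v ≤ cdf m₀ x₀ :=
      ge_of_tendsto (hfc.continuousWithinAt (s := Set.Ioi x₀))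
        (eventually_nhdsWithin_of_forall fun t ht => hge t ht)
    linarith
  -- rewrite the limit
  have hLrw : ((m₀ (Set.Iic x₀)).toReal - (ν (Set.Iic x₀)).toReal) / p₀ x₀
      = (v - cdf ν x₀) / p₀ x₀ := by
    rw [← measureReal_def, ← measureReal_def, ← cdf_eq_real, ← cdf_eq_real, hfv]
  rw [hLrw]
  set L : ℝ := (v - cdf ν x₀) / p₀ x₀ with hLdef
  have hpL : p₀ x₀ * L = v - cdf ν x₀ := by
    rw [hLdef, mul_div_cancel₀ _ hp.ne']
  rw [Metric.tendsto_nhdsWithin_nhds]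
  intro η' hη'
  set M : ℝ := max (|L| + η') (8 / p₀ x₀) with hMdef
  have hML : |L| + η' ≤ M := le_max_left _ _
  have hM8 : 8 ≤ p₀ x₀ * M := by
    have h := le_max_right (|L| + η') (8 / p₀ x₀)
    rw [← hMdef, div_le_iff₀ hp] at h
    nlinarith
  have hM0 : 0 < M := lt_of_lt_of_le (by positivity) (le_max_right _ _)
  set η : ℝ := min (p₀ x₀ / 2) (p₀ x₀ * η' / (8 * (M + 1))) with hηdef
  have hηpos : 0 < η := by
    apply lt_min
    · positivity
    · positivity
  have hη1 : η ≤ p₀ x₀ / 2 := min_le_left _ _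
  have hη2 : η * (M + 1) ≤ p₀ x₀ * η' / 8 := by
    have h := min_le_right (p₀ x₀ / 2) (p₀ x₀ * η' / (8 * (M + 1)))
    rw [← hηdef] at h
    calc η * (M + 1) ≤ (p₀ x₀ * η' / (8 * (M + 1))) * (M + 1) := by nlinarith
      _ = p₀ x₀ * η' / 8 := by field_simp
  obtain ⟨δ₁, hδ₁pos, hδ₁⟩ := Metric.continuousAt_iff.mp
    (hcont.continuousAt (Ioo_mem_nhds hab.1 hab.2)) η hηpos
  obtain ⟨δ₂, hδ₂pos, hδ₂⟩ := Metric.continuousAt_iff.mp hgc η hηpos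
  set δ : ℝ := min (min (δ₁/2) (δ₂/2)) (min ((x₀ - a)/2) ((b - x₀)/2)) with hδdef
  have hxa : 0 < x₀ - a := sub_pos.2 hab.1
  have hbx : 0 < b - x₀ := sub_pos.2 hab.2
  have hδpos : 0 < δ := by
    apply lt_min (lt_min (by positivity) (by positivity)) (lt_min (by positivity) (by positivity))
  have hball : ∀ t : ℝ, |t - x₀| ≤ δ → a < t ∧ t < b := by
    intro t ht
    have h1 : δ ≤ (x₀ - a)/2 := le_trans (min_le_right _ _) (min_le_left _ _)
    have h2 : δ ≤ (b - x₀)/2 := le_trans (min_le_right _ _) (min_le_right _ _)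
    have h3 := abs_le.mp ht
    constructor <;> [linarith [h3.1]; linarith [h3.2]]
  have hpball : ∀ t : ℝ, |t - x₀| ≤ δ → |p₀ t - p₀ x₀| ≤ η := by
    intro t ht
    have h1 : δ ≤ δ₁/2 := le_trans (min_le_left _ _) (min_le_left _ _)
    have h2 : dist t x₀ < δ₁ := by rw [Real.dist_eq]; linarith
    have h3 := hδ₁ h2
    rw [Real.dist_eq] at h3
    exact h3.le
  have hgball : ∀ t : ℝ, |t - x₀| ≤ δ → |cdf ν t - cdf ν x₀| ≤ η := by
    intro t ht
    have h1 : δ ≤ δ₂/2 := le_trans (min_le_left _ _) (min_le_right _ _)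
    have h2 : dist t x₀ < δ₂ := by rw [Real.dist_eq]; linarith
    have h3 := hδ₂ h2
    rw [Real.dist_eq] at h3
    exact h3.le
  have hf_incr := aux_fincr v m₀ x₀ a b hab p₀ hp hdens hfv η δ hηpos hη1 hδpos hball hpball
  obtain ⟨d, hd0, hd⟩ := aux_main v hv0 m₀ ν x₀ p₀ hp hfv L η' M η δ hη' hpL hML hM8 hM0
    hηpos hη1 hη2 hδpos hgball hf_incr xq hxq
  exact ⟨d, hd0, fun {x} hx hdx => hd x hx hdx⟩
end
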